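/- Let (V, B_d, B_r) be an interconnection with incidence matrices G_d, G_r, such that (V, B_d ∪ B_r) is connected and B_d ≠ ∅. If there exists a nonzero vector x with G_dᵀ G_r x = 0 and sgn(G_rᵀ G_r x) = sgn(x) entrywise, then there exist Laplacians D ∈ lap(V, B_d) and R ∈ lap(V, B_r) with Re λ₂(D + iR) ≤ 0 (the interconnection is not SSS). -/
import Mathlib


open Matrix Polynomial

/-- `G` is the incidence matrix of a graph: every column is `e_k - e_ℓ`
for some pair of distinct vertices `k, ℓ`. -/
def IsIncidence {q p : ℕ} (G : Matrix (Fin q) (Fin p) ℝ) : Prop :=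
  ∀ j : Fin p, ∃ k ℓ : Fin q, k ≠ ℓ ∧
    ∀ i : Fin q, G i j = (if i = k then 1 else 0) - (if i = ℓ then 1 else 0)

/-- The complex matrix `D + iR` built from two real matrices. -/
noncomputable def cM {q : ℕ} (D R : Matrix (Fin q) (Fin q) ℝ) :
    Matrix (Fin q) (Fin q) ℂ :=
  D.map (fun a => (a : ℂ)) + Complex.I • (R.map (fun a => (a : ℂ)))

/-- `Re λ₂(M) > 0`: at most one eigenvalue (with multiplicity), ordered by real
part, has nonpositive real part. -/
noncomputable def reLam2Pos {q : ℕ} (M : Matrix (Fin q) (Fin q) ℂ) : Prop :=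
  (M.charpoly.roots.filter (fun μ : ℂ => μ.re ≤ 0)).card ≤ 1

/-- `Re λ₂(M) ≤ 0`: at least two eigenvalues (with multiplicity), ordered by real
part, have nonpositive real part. -/
noncomputable def reLam2Nonpos {q : ℕ} (M : Matrix (Fin q) (Fin q) ℂ) : Prop :=
  2 ≤ (M.charpoly.roots.filter (fun μ : ℂ => μ.re ≤ 0)).card

/-- The weighted Laplacian `G Λ Gᵀ`. -/
def lapOf {q p : ℕ} (G : Matrix (Fin q) (Fin p) ℝ) (w : Fin p → ℝ) :
    Matrix (Fin q) (Fin q) ℝ :=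
  G * diagonal w * Gᵀ

lemma eigen_mem_roots {n : ℕ} (M : Matrix (Fin n) (Fin n) ℂ) (μ : ℂ) (v : Fin n → ℂ)
    (hv : v ≠ 0) (h : M.mulVec v = μ • v) : μ ∈ M.charpoly.roots := by
  rw [mem_roots (M.charpoly_monic.ne_zero)]
  show Polynomial.eval μ M.charpoly = 0
  have hdet : (Matrix.diagonal (fun _ : Fin n => μ) - M).det = 0 := by
    rw [← Matrix.exists_mulVec_eq_zero_iff]
    refine ⟨v, hv, ?_⟩
    rw [Matrix.sub_mulVec, h]
    ext i
    simp [Matrix.mulVec_diagonal]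
  have : Polynomial.eval μ M.charpoly = (Matrix.diagonal (fun _ : Fin n => μ) - M).det := by
    rw [Matrix.charpoly, ← Polynomial.coe_evalRingHom, RingHom.map_det]
    congr 1
    ext i j
    by_cases hij : i = j <;>
      simp [hij, Matrix.charmatrix_apply, Matrix.diagonal_apply]
  rw [this, hdet]

lemma incidence_col_sum {q p : ℕ} {G : Matrix (Fin q) (Fin p) ℝ} (hG : IsIncidence G) :
    Gᵀ.mulVec (fun _ => 1) = 0 := by
  ext j
  obtain ⟨k, ℓ, hkl, hcol⟩ := hG j
  have : ∀ i, Gᵀ j i = (if i = k then (1:ℝ) else 0) - (if i = ℓ then 1 else 0) := fun i => hcol i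
  simp only [Matrix.mulVec, dotProduct, this, Pi.zero_apply, mul_one]
  rw [Finset.sum_sub_distrib]
  simp [Finset.sum_ite_eq']

lemma map_complex_mulVec {q : ℕ} (A : Matrix (Fin q) (Fin q) ℝ) (u : Fin q → ℝ) :
    (A.map (fun a => (a : ℂ))).mulVec (fun i => (u i : ℂ)) = fun i => ((A.mulVec u) i : ℂ) := by
  ext i
  exact (RingHom.map_mulVec Complex.ofRealHom A u i).symm

/-- If the union graph is connected, `B_d ≠ ∅`, and there is a nonzero `x` with
`G_dᵀ G_r x = 0` and `sgn(G_rᵀ G_r x) = sgn(x)`, then some choice of Laplacians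
gives `Re λ₂(D + iR) ≤ 0` (the interconnection is not SSS). -/
theorem stmt16 {q pd pr : ℕ} (hq : 2 ≤ q)
    (Gd : Matrix (Fin q) (Fin pd) ℝ) (Gr : Matrix (Fin q) (Fin pr) ℝ)
    (hGd : IsIncidence Gd) (hGr : IsIncidence Gr)
    (hconn : ∀ v : Fin q → ℝ, Gdᵀ.mulVec v = 0 → Grᵀ.mulVec v = 0 →
      ∃ c : ℝ, v = fun _ => c)
    (hpd : 0 < pd)
    (x : Fin pr → ℝ) (hx : x ≠ 0)
    (hx0 : Gdᵀ.mulVec (Gr.mulVec x) = 0)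
    (hsgn : ∀ i, Real.sign ((Grᵀ.mulVec (Gr.mulVec x)) i) = Real.sign (x i)) :
    ∃ (wd : Fin pd → ℝ) (wr : Fin pr → ℝ),
      (∀ i, 0 < wd i) ∧ (∀ i, 0 < wr i) ∧
      reLam2Nonpos (cM (lapOf Gd wd) (lapOf Gr wr)) := by
  classical
  set y : Fin q → ℝ := Gr.mulVec x with hy_def
  set z : Fin pr → ℝ := Grᵀ.mulVec y with hz_def
  -- y ≠ 0
  have hx' : ∃ i, x i ≠ 0 := by
    by_contra h
    push_neg at h
    exact hx (funext h)
  have hy : y ≠ 0 := by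
    intro h
    have hz0 : z = 0 := by rw [hz_def, h, Matrix.mulVec_zero]
    obtain ⟨i, hi⟩ := hx'
    have h2 := hsgn i
    rw [hz0] at h2
    simp [Real.sign_zero] at h2
    exact hi (Real.sign_eq_zero_iff.mp h2.symm)
  -- weights
  refine ⟨fun _ => 1, fun i => if z i = 0 then 1 else x i / z i, fun _ => one_pos, ?_, ?_⟩
  · intro i
    by_cases h : z i = 0
    · simp [h]
    · simp only [h, if_false]
      have hs := hsgn i
      rcases lt_trichotomy (z i) 0 with hz | hz | hz
      · have : Real.sign (x i) = -1 := by rw [← hs, Real.sign_of_neg hz]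
        have hxi : x i < 0 := by
          rcases lt_trichotomy (x i) 0 with h' | h' | h'
          · exact h'
          · simp [h', Real.sign_zero] at this
          · rw [Real.sign_of_pos h'] at this; norm_num at this
        exact div_pos_of_neg_of_neg hxi hz
      · exact absurd hz h
      · have : Real.sign (x i) = 1 := by rw [← hs, Real.sign_of_pos hz]
        have hxi : 0 < x i := by
          rcases lt_trichotomy (x i) 0 with h' | h' | h'
          · rw [Real.sign_of_neg h'] at this; norm_num at this
          · simp [h', Real.sign_zero] at this
          · exact h'
        exact div_pos hxi hz
  -- the spectral claim
  · set wr : Fin pr → ℝ := fun i => if z i = 0 then 1 else x i / z i with hwr_def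
    set D : Matrix (Fin q) (Fin q) ℝ := lapOf Gd (fun _ => 1) with hD_def
    set R : Matrix (Fin q) (Fin q) ℝ := lapOf Gr wr with hR_def
    have lap_mulVec : ∀ {p : ℕ} (G : Matrix (Fin q) (Fin p) ℝ) (w : Fin p → ℝ) (v : Fin q → ℝ),
        (lapOf G w).mulVec v = G.mulVec ((Matrix.diagonal w).mulVec (Gᵀ.mulVec v)) := by
      intro p G w v
      rw [lapOf, ← Matrix.mulVec_mulVec, ← Matrix.mulVec_mulVec]
    have hones_d : Gdᵀ.mulVec (fun _ => 1) = 0 := incidence_col_sum hGd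
    have hones_r : Grᵀ.mulVec (fun _ => 1) = 0 := incidence_col_sum hGr
    have hD1 : D.mulVec (fun _ => 1) = 0 := by
      rw [hD_def, lap_mulVec, hones_d, Matrix.mulVec_zero, Matrix.mulVec_zero]
    have hR1 : R.mulVec (fun _ => 1) = 0 := by
      rw [hR_def, lap_mulVec, hones_r, Matrix.mulVec_zero, Matrix.mulVec_zero]
    have hDy : D.mulVec y = 0 := by
      rw [hD_def, lap_mulVec, hx0, Matrix.mulVec_zero, Matrix.mulVec_zero]
    have hwrz : ∀ i, wr i * z i = x i := by
      intro i
      by_cases h : z i = 0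
      · have hs := hsgn i
        rw [h] at hs
        simp only [Real.sign_zero] at hs
        rw [hwr_def]
        simp [h, Real.sign_eq_zero_iff.mp hs.symm]
      · rw [hwr_def]
        simp only [h, if_false]
        field_simp
    have hRy : R.mulVec y = y := by
      rw [hR_def, lap_mulVec]
      have : (Matrix.diagonal wr).mulVec (Grᵀ.mulVec y) = x := by
        ext i
        rw [Matrix.mulVec_diagonal]
        exact hwrz i
      rw [this]
    -- complex eigenvectors
    set M : Matrix (Fin q) (Fin q) ℂ := cM D R with hM_def
    have hMv : ∀ u : Fin q → ℝ, M.mulVec (fun i => (u i : ℂ)) =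
        (fun i => ((D.mulVec u) i : ℂ)) + Complex.I • (fun i => ((R.mulVec u) i : ℂ)) := by
      intro u
      rw [hM_def, cM, Matrix.add_mulVec, Matrix.smul_mulVec,
        map_complex_mulVec, map_complex_mulVec]
    have e0 : (0 : ℂ) ∈ M.charpoly.roots := by
      refine eigen_mem_roots M 0 (fun _ => (((1:ℝ)) : ℂ)) ?_ ?_
      · intro h
        have := congrFun h ⟨0, by omega⟩
        simp at this
      · refine (hMv (fun _ => 1)).trans ?_
        rw [hD1, hR1]
        ext i
        simp
    have eI : Complex.I ∈ M.charpoly.roots := by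
      refine eigen_mem_roots M Complex.I (fun i => (y i : ℂ)) ?_ ?_
      · intro h
        apply hy
        ext i
        have := congrFun h i
        simpa using this
      · refine (hMv y).trans ?_
        rw [hDy, hRy]
        ext i
        simp
    -- count
    rw [reLam2Nonpos]
    have m0 : (0 : ℂ) ∈ M.charpoly.roots.filter (fun μ : ℂ => μ.re ≤ 0) :=
      Multiset.mem_filter.mpr ⟨e0, by norm_num⟩
    have mI : Complex.I ∈ M.charpoly.roots.filter (fun μ : ℂ => μ.re ≤ 0) :=
      Multiset.mem_filter.mpr ⟨eI, by simp [Complex.I_re]⟩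
    obtain ⟨t, ht⟩ := Multiset.exists_cons_of_mem m0
    rw [ht] at mI ⊢
    have hIt : Complex.I ∈ t := by
      rcases Multiset.mem_cons.mp mI with h | h
      · exact absurd h Complex.I_ne_zero
      · exact h
    obtain ⟨u, hu⟩ := Multiset.exists_cons_of_mem hIt
    rw [hu]
    simp only [Multiset.card_cons]
    omega
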